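/- Monotonicity of the Riccati operator: if 0 ⪯ P₁ ⪯ P₂ (Loewner order) then R(P₁) ⪯ R(P₂), where R(P) = Q + AᵀPA − AᵀPB(BᵀPB+R)⁻¹BᵀPA. -/
import Mathlib


open Matrix

/-- Spectral radius of a real matrix: max modulus of its complex eigenvalues. -/
noncomputable def specRad {d : ℕ} (M : Matrix (Fin d) (Fin d) ℝ) : ENNReal :=
  spectralRadius ℂ (M.map Complex.ofReal)

/-- Operator norm of a real matrix induced by Euclidean norms. -/
noncomputable def opNorm {d₁ d₂ : ℕ} (M : Matrix (Fin d₁) (Fin d₂) ℝ) : ℝ :=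
  ‖LinearMap.toContinuousLinearMap (Matrix.toEuclideanLin M)‖

/-- Euclidean norm of a real vector. -/
noncomputable def enorm {n : ℕ} (v : Fin n → ℝ) : ℝ := Real.sqrt (∑ i, (v i)^2)

/-- Completion of squares for the Riccati operator. -/
private lemma completion_sq {d du : ℕ} (Q A P : Matrix (Fin d) (Fin d) ℝ)
    (B : Matrix (Fin d) (Fin du) ℝ) (R S T : Matrix (Fin du) (Fin du) ℝ)
    (K : Matrix (Fin du) (Fin d) ℝ)
    (hP : Pᵀ = P) (hS : S = Bᵀ * P * B + R) (hT : Tᵀ = T)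
    (h1 : S * T = 1) (h2 : T * S = 1) :
    Q + Kᵀ * R * K + (A + B * K)ᵀ * P * (A + B * K)
      = (Q + Aᵀ * P * A - Aᵀ * P * B * T * (Bᵀ * P * A))
        + (K + T * (Bᵀ * P * A))ᵀ * S * (K + T * (Bᵀ * P * A)) := by
  have hST : ∀ {m : ℕ} (X : Matrix (Fin du) (Fin m) ℝ), S * (T * X) = X := by
    intro m X; rw [← Matrix.mul_assoc, h1, Matrix.one_mul]
  have hTS : ∀ {m : ℕ} (X : Matrix (Fin du) (Fin m) ℝ), T * (S * X) = X := by
    intro m X; rw [← Matrix.mul_assoc, h2, Matrix.one_mul]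
  simp only [Matrix.transpose_add, Matrix.transpose_mul, Matrix.transpose_transpose,
    hT, hP, Matrix.add_mul, Matrix.mul_add, Matrix.mul_assoc, hST, hTS]
  rw [hS]
  simp only [Matrix.add_mul, Matrix.mul_add, Matrix.mul_assoc]
  abel

/-- Monotonicity of the Riccati operator in the Loewner order. -/
theorem riccati_operator_monotone {d du : ℕ}
    (A Q : Matrix (Fin d) (Fin d) ℝ) (B : Matrix (Fin d) (Fin du) ℝ)
    (R : Matrix (Fin du) (Fin du) ℝ)
    (hQ : Q.IsHermitian) (hR : R.PosDef)
    (P₁ P₂ : Matrix (Fin d) (Fin d) ℝ)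
    (hP₁ : P₁.PosSemidef) (hle : (P₂ - P₁).PosSemidef) :
    ((Q + Aᵀ * P₂ * A - Aᵀ * P₂ * B * (Bᵀ * P₂ * B + R)⁻¹ * (Bᵀ * P₂ * A))
      - (Q + Aᵀ * P₁ * A - Aᵀ * P₁ * B * (Bᵀ * P₁ * B + R)⁻¹ * (Bᵀ * P₁ * A))).PosSemidef := by
  have hP₂ : P₂.PosSemidef := by simpa using hle.add hP₁
  have hBt : Bᴴ = Bᵀ := Matrix.conjTranspose_eq_transpose_of_trivial B
  have hS₁d : (Bᵀ * P₁ * B + R).PosDef := by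
    have := hP₁.conjTranspose_mul_mul_same B
    rw [hBt] at this
    exact Matrix.PosDef.posSemidef_add this hR
  have hS₂d : (Bᵀ * P₂ * B + R).PosDef := by
    have := hP₂.conjTranspose_mul_mul_same B
    rw [hBt] at this
    exact Matrix.PosDef.posSemidef_add this hR
  set S₁ := Bᵀ * P₁ * B + R with hS₁
  set S₂ := Bᵀ * P₂ * B + R with hS₂
  have hd₁ : IsUnit S₁.det := (Matrix.isUnit_iff_isUnit_det _).1 hS₁d.isUnit
  have hd₂ : IsUnit S₂.det := (Matrix.isUnit_iff_isUnit_det _).1 hS₂d.isUnit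
  have ht₁ : S₁ᵀ = S₁ := by
    rw [← Matrix.conjTranspose_eq_transpose_of_trivial]; exact hS₁d.isHermitian.eq
  have ht₂ : S₂ᵀ = S₂ := by
    rw [← Matrix.conjTranspose_eq_transpose_of_trivial]; exact hS₂d.isHermitian.eq
  have hti₁ : (S₁⁻¹)ᵀ = S₁⁻¹ := by rw [Matrix.transpose_nonsing_inv, ht₁]
  have hti₂ : (S₂⁻¹)ᵀ = S₂⁻¹ := by rw [Matrix.transpose_nonsing_inv, ht₂]
  have hp₁t : P₁ᵀ = P₁ := by
    rw [← Matrix.conjTranspose_eq_transpose_of_trivial]; exact hP₁.isHermitian.eq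
  have hp₂t : P₂ᵀ = P₂ := by
    rw [← Matrix.conjTranspose_eq_transpose_of_trivial]; exact hP₂.isHermitian.eq
  set K : Matrix (Fin du) (Fin d) ℝ := -(S₂⁻¹ * (Bᵀ * P₂ * A)) with hK
  have e₂ : Q + Kᵀ * R * K + (A + B * K)ᵀ * P₂ * (A + B * K)
      = Q + Aᵀ * P₂ * A - Aᵀ * P₂ * B * S₂⁻¹ * (Bᵀ * P₂ * A) := by
    rw [completion_sq Q A P₂ B R S₂ S₂⁻¹ K hp₂t hS₂ hti₂
      (Matrix.mul_nonsing_inv _ hd₂) (Matrix.nonsing_inv_mul _ hd₂)]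
    rw [hK, neg_add_cancel]
    simp
  have e₁ : Q + Kᵀ * R * K + (A + B * K)ᵀ * P₁ * (A + B * K)
      = (Q + Aᵀ * P₁ * A - Aᵀ * P₁ * B * S₁⁻¹ * (Bᵀ * P₁ * A))
        + (K + S₁⁻¹ * (Bᵀ * P₁ * A))ᵀ * S₁ * (K + S₁⁻¹ * (Bᵀ * P₁ * A)) :=
    completion_sq Q A P₁ B R S₁ S₁⁻¹ K hp₁t hS₁ hti₁
      (Matrix.mul_nonsing_inv _ hd₁) (Matrix.nonsing_inv_mul _ hd₁)
  have key : (Q + Aᵀ * P₂ * A - Aᵀ * P₂ * B * S₂⁻¹ * (Bᵀ * P₂ * A))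
      - (Q + Aᵀ * P₁ * A - Aᵀ * P₁ * B * S₁⁻¹ * (Bᵀ * P₁ * A))
      = (A + B * K)ᵀ * (P₂ - P₁) * (A + B * K)
        + (K + S₁⁻¹ * (Bᵀ * P₁ * A))ᵀ * S₁ * (K + S₁⁻¹ * (Bᵀ * P₁ * A)) := by
    rw [← e₂]
    rw [show Q + Aᵀ * P₁ * A - Aᵀ * P₁ * B * S₁⁻¹ * (Bᵀ * P₁ * A)
        = (Q + Kᵀ * R * K + (A + B * K)ᵀ * P₁ * (A + B * K))
          - (K + S₁⁻¹ * (Bᵀ * P₁ * A))ᵀ * S₁ * (K + S₁⁻¹ * (Bᵀ * P₁ * A)) from by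
      rw [e₁]; abel]
    simp only [Matrix.mul_sub, Matrix.sub_mul]
    abel
  rw [key]
  have c₁ := hle.conjTranspose_mul_mul_same (A + B * K)
  rw [Matrix.conjTranspose_eq_transpose_of_trivial] at c₁
  have c₂ := hS₁d.posSemidef.conjTranspose_mul_mul_same (K + S₁⁻¹ * (Bᵀ * P₁ * A))
  rw [Matrix.conjTranspose_eq_transpose_of_trivial] at c₂
  exact c₁.add c₂
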